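/- Linear independence of the output derivative rows (equation (26)). Let A ∈ ℝ^{n×n}, B ∈ ℝ^{n×m}, C ∈ ℝ^{p×n} be such that for each i ∈ {1,…,p} the relative order d_i exists (d_i ≤ n and C_i A^{d_i−1} B ≠ 0), and suppose rank B* = p. Then the n_co := d_1 + ⋯ + d_p row vectors {C_i A^j : 1 ≤ i ≤ p, 0 ≤ j ≤ d_i − 1} are linearly independent in ℝ^{1×n}; in particular the n_co × n matrix P stacking these rows has rank n_co, and d_1 + ⋯ + d_p ≤ n. -/

import Mathlib

noncomputable section
open Matrix

/-- Linear independence of the output derivative rows (equation (26)): if each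
relative order `d i` exists and `rank B* = p`, then the `n_co = d 1 + ⋯ + d p`
row vectors `Cᵢ Aʲ` (`1 ≤ i ≤ p`, `0 ≤ j ≤ dᵢ - 1`) are linearly independent;
in particular the matrix `P` stacking them has rank `n_co`, and `n_co ≤ n`. -/
theorem output_derivative_rows_independent
    (n m p : ℕ) (A : Matrix (Fin n) (Fin n) ℝ) (B : Matrix (Fin n) (Fin m) ℝ)
    (C : Matrix (Fin p) (Fin n) ℝ) (d : Fin p → ℕ)
    (hd1 : ∀ i, 1 ≤ d i) (hdn : ∀ i, d i ≤ n)
    (hdne : ∀ i, (fun j => (C * A ^ (d i - 1) * B) i j) ≠ 0)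
    (hdmin : ∀ i, ∀ j, 1 ≤ j → j < d i → (fun l => (C * A ^ (j - 1) * B) i l) = 0)
    (Bstar : Matrix (Fin p) (Fin m) ℝ)
    (hBstar : Bstar = Matrix.of fun i j => (C * A ^ (d i - 1) * B) i j)
    (hrank : Bstar.rank = p)
    (P : Matrix ((i : Fin p) × Fin (d i)) (Fin n) ℝ)
    (hP : P = Matrix.of fun ij l => (C * A ^ (ij.2 : ℕ)) ij.1 l) :
    LinearIndependent ℝ (fun ij : (i : Fin p) × Fin (d i) =>
        (fun l => (C * A ^ (ij.2 : ℕ)) ij.1 l : Fin n → ℝ)) ∧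
      P.rank = ∑ i, d i ∧ (∑ i, d i) ≤ n := by
  classical
  -- rows of Bstar are linearly independent
  have hBli : LinearIndependent ℝ (fun i => Bstar i) := by
    rw [linearIndependent_iff_card_eq_finrank_span]
    show (Fintype.card (Fin p)) = Set.finrank ℝ (Set.range Bstar.row)
    rw [Set.finrank, ← Bstar.rank_eq_finrank_span_row, hrank, Fintype.card_fin]
  -- C_i A^q B = 0 whenever q + 1 < d i
  have hz : ∀ (i : Fin p) (q : ℕ) (k : Fin m), q + 1 < d i → (C * A ^ q * B) i k = 0 := by
    intro i q k hq
    have h := hdmin i (q + 1) (by omega) (by omega)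
    have := congrFun h k
    simpa using this
  -- main linear independence
  have key : LinearIndependent ℝ (fun ij : (i : Fin p) × Fin (d i) =>
      (fun l => (C * A ^ (ij.2 : ℕ)) ij.1 l : Fin n → ℝ)) := by
    rw [Fintype.linearIndependent_iff]
    intro g hg
    have hgl : ∀ l : Fin n,
        ∑ ij : (i : Fin p) × Fin (d i), g ij * (C * A ^ (ij.2 : ℕ)) ij.1 l = 0 := by
      intro l
      have := congrFun hg l
      simpa [Finset.sum_apply] using this
    -- induction claim: g ⟨i,j⟩ = 0 when j + s + 1 = d i
    have main : ∀ s : ℕ, ∀ (i : Fin p) (j : Fin (d i)), (j : ℕ) + s + 1 = d i →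
        g ⟨i, j⟩ = 0 := by
      intro s
      induction s using Nat.strong_induction_on with
      | _ s IH =>
        intro i j hj
        -- multiply the relation by A^s * B
        have h2 : ∀ k : Fin m,
            ∑ ij : (i : Fin p) × Fin (d i),
              g ij * (C * A ^ ((ij.2 : ℕ) + s) * B) ij.1 k = 0 := by
          intro k
          calc ∑ ij : (i : Fin p) × Fin (d i),
                g ij * (C * A ^ ((ij.2 : ℕ) + s) * B) ij.1 k
              = ∑ ij : (i : Fin p) × Fin (d i), ∑ l : Fin n,
                  g ij * (C * A ^ (ij.2 : ℕ)) ij.1 l * (A ^ s * B) l k := by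
                apply Finset.sum_congr rfl
                intro ij _
                have h3 : (C * A ^ ((ij.2 : ℕ) + s) * B) ij.1 k
                    = ∑ l, (C * A ^ (ij.2 : ℕ)) ij.1 l * (A ^ s * B) l k := by
                  rw [pow_add, ← Matrix.mul_assoc, Matrix.mul_assoc (C * A ^ (ij.2 : ℕ))]
                  exact Matrix.mul_apply
                rw [h3, Finset.mul_sum]
                apply Finset.sum_congr rfl
                intro l _
                ring
            _ = ∑ l : Fin n, ∑ ij : (i : Fin p) × Fin (d i),
                  g ij * (C * A ^ (ij.2 : ℕ)) ij.1 l * (A ^ s * B) l k :=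
                Finset.sum_comm
            _ = ∑ l : Fin n,
                  (∑ ij : (i : Fin p) × Fin (d i),
                    g ij * (C * A ^ (ij.2 : ℕ)) ij.1 l) * (A ^ s * B) l k := by
                apply Finset.sum_congr rfl
                intro l _
                rw [Finset.sum_mul]
            _ = 0 := by
                apply Finset.sum_eq_zero
                intro l _
                rw [hgl l, zero_mul]
        -- the surviving coefficients
        set e : Fin p → ℝ := fun i' =>
          if s + 1 ≤ d i' then g ⟨i', ⟨d i' - 1 - s, by have := hd1 i'; omega⟩⟩ else 0 with he
        have h4 : ∀ k : Fin m, ∑ i' : Fin p, e i' * Bstar i' k = 0 := by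
          intro k
          rw [← h2 k, ← Finset.univ_sigma_univ, Finset.sum_sigma]
          apply Finset.sum_congr rfl
          intro i' _
          by_cases hcase : s + 1 ≤ d i'
          · have hj0 : d i' - 1 - s < d i' := by omega
            rw [Finset.sum_eq_single (⟨d i' - 1 - s, hj0⟩ : Fin (d i'))]
            · simp only [he, if_pos hcase]
              have : (d i' - 1 - s) + s = d i' - 1 := by omega
              rw [this, hBstar]
              rfl
            · intro j' _ hne
              by_cases hlt : (j' : ℕ) + s + 1 < d i'
              · rw [hz i' ((j' : ℕ) + s) k hlt, mul_zero]
              · by_cases heq : (j' : ℕ) + s + 1 = d i'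
                · exfalso
                  apply hne
                  apply Fin.ext
                  simp only
                  omega
                · have : (j' : ℕ) + (d i' - 1 - (j' : ℕ)) + 1 = d i' := by
                    have := j'.isLt; omega
                  have hIH := IH (d i' - 1 - (j' : ℕ)) (by have := j'.isLt; omega) i' j' this
                  rw [hIH, zero_mul]
            · intro h
              exact absurd (Finset.mem_univ _) h
          · simp only [he, if_neg hcase, zero_mul]
            symm
            apply Finset.sum_eq_zero
            intro j' _
            have : (j' : ℕ) + (d i' - 1 - (j' : ℕ)) + 1 = d i' := by
              have := j'.isLt; omega
            have hIH := IH (d i' - 1 - (j' : ℕ)) (by have := j'.isLt; omega) i' j' this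
            rw [hIH, zero_mul]
        -- conclude e = 0 by independence of rows of Bstar
        have he0 : ∀ i', e i' = 0 := by
          have := Fintype.linearIndependent_iff.mp hBli e ?_
          · exact this
          · funext k
            have := h4 k
            simpa [Finset.sum_apply] using this
        have h5 := he0 i
        simp only [he] at h5
        rw [if_pos (show s + 1 ≤ d i by omega)] at h5
        have hjeq : (⟨d i - 1 - s, by omega⟩ : Fin (d i)) = j := by
          apply Fin.ext
          simp only
          omega
        rwa [hjeq] at h5
    intro ij
    obtain ⟨i, j⟩ := ij
    exact main (d i - 1 - (j : ℕ)) i j (by have := j.isLt; omega)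
  refine ⟨key, ?_, ?_⟩
  · have hli : LinearIndependent ℝ P := by rw [hP]; exact key
    rw [hli.rank_matrix]
    simp [Fintype.card_sigma]
  · have h := key.fintype_card_le_finrank (R := ℝ) (M := Fin n → ℝ)
    simpa [Fintype.card_sigma] using h
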